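/- arXiv:1803.08160 — 2 statements merged into one kernel-verified Lean document; each statement's English description precedes it below -/
import Mathlib

section
/- Let α > 0, c ∈ [0,1], β > 0, and set γ := √(2β). Define f₀(x) := e^{−γx} and f₁(x) := e^{−γx}·[γ(e^{−2αx} − 1)/(2α(γ + α)) + cx]. Then f₁ is twice differentiable and satisfies (1/2)f₁''(x) − βf₁(x) + (e^{−2αx} − c)f₀'(x) = 0 for all x ∈ ℝ; moreover f₁(0) = 0 and f₁(x) → 0 as x → +∞. -/
open Real Filter

/-- The first-order perturbation term for the downward FPT Laplace transform:
with `γ = √(2β)`, `f₀(x) = e^{−γx}` and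
`f₁(x) = e^{−γx} (γ(e^{−2αx} − 1)/(2α(γ + α)) + cx)`,
`f₁` is twice differentiable, solves `(1/2)f₁'' − βf₁ + (e^{−2αx} − c)f₀' = 0` on `ℝ`,
satisfies `f₁(0) = 0` and `f₁(x) → 0` as `x → +∞`. -/
theorem first_order_perturbation_term
    (α c β : ℝ) (hα : 0 < α) (hc0 : 0 ≤ c) (hc1 : c ≤ 1) (hβ : 0 < β)
    (γ : ℝ) (hγ : γ = Real.sqrt (2 * β))
    (f₀ f₁ : ℝ → ℝ)
    (hf₀ : ∀ x, f₀ x = Real.exp (-γ * x))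
    (hf₁ : ∀ x, f₁ x = Real.exp (-γ * x) *
      (γ * (Real.exp (-2 * α * x) - 1) / (2 * α * (γ + α)) + c * x)) :
    (∀ x, DifferentiableAt ℝ f₁ x) ∧ (∀ x, DifferentiableAt ℝ (deriv f₁) x) ∧
      (∀ x : ℝ, (1 / 2) * deriv (deriv f₁) x - β * f₁ x +
        (Real.exp (-2 * α * x) - c) * deriv f₀ x = 0) ∧
      f₁ 0 = 0 ∧
      Filter.Tendsto f₁ Filter.atTop (nhds 0) := by
  have hγpos : 0 < γ := by rw [hγ]; positivity
  have hγ2 : γ ^ 2 = 2 * β := by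
    rw [hγ, Real.sq_sqrt]; positivity
  set A : ℝ := γ / (2 * α * (γ + α)) with hA
  have hden : 2 * α * (γ + α) ≠ 0 := by positivity
  have hAe : A * (2 * α * (γ + α)) = γ := by
    rw [hA, div_mul_cancel₀ _ hden]
  -- explicit functions
  set P : ℝ → ℝ := fun x => A * (Real.exp (-2 * α * x) - 1) + c * x with hP
  have hf₁e : f₁ = fun x => Real.exp (-γ * x) * P x := by
    funext x; rw [hf₁, hP]; ring
  -- derivative of exp(-2αx)
  have hE : ∀ x : ℝ, HasDerivAt (fun x => Real.exp (-2 * α * x))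
      (Real.exp (-2 * α * x) * (-2 * α)) x := by
    intro x
    simpa only [id_eq, mul_one] using (((hasDerivAt_id x).const_mul (-2 * α)).exp)
  have hPd : ∀ x : ℝ, HasDerivAt P (A * (Real.exp (-2 * α * x) * (-2 * α)) + c) x := by
    intro x
    have h := (((hE x).sub_const 1).const_mul A).add ((hasDerivAt_id x).const_mul c)
    simpa only [id_eq, mul_one, Pi.add_def] using h
  have hEg : ∀ x : ℝ, HasDerivAt (fun x => Real.exp (-γ * x))
      (Real.exp (-γ * x) * (-γ)) x := by
    intro x
    simpa only [id_eq, mul_one] using (((hasDerivAt_id x).const_mul (-γ)).exp)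
  -- first derivative
  set g₁ : ℝ → ℝ := fun x => Real.exp (-γ * x) * (-γ) * P x +
      Real.exp (-γ * x) * (A * (Real.exp (-2 * α * x) * (-2 * α)) + c) with hg₁
  have hd1 : ∀ x : ℝ, HasDerivAt f₁ (g₁ x) x := by
    intro x
    rw [hf₁e]
    exact (hEg x).mul (hPd x)
  have hderiv1 : deriv f₁ = g₁ := funext fun x => (hd1 x).deriv
  -- second derivative
  set g₂ : ℝ → ℝ := fun x =>
      (Real.exp (-γ * x) * (-γ) * (-γ) * P x +
        Real.exp (-γ * x) * (-γ) * (A * (Real.exp (-2 * α * x) * (-2 * α)) + c)) +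
      (Real.exp (-γ * x) * (-γ) * (A * (Real.exp (-2 * α * x) * (-2 * α)) + c) +
        Real.exp (-γ * x) * (A * (Real.exp (-2 * α * x) * (-2 * α) * (-2 * α)))) with hg₂
  have hd2 : ∀ x : ℝ, HasDerivAt g₁ (g₂ x) x := by
    intro x
    have h1 : HasDerivAt (fun x => Real.exp (-γ * x) * (-γ))
        (Real.exp (-γ * x) * (-γ) * (-γ)) x := (hEg x).mul_const (-γ)
    have h2 : HasDerivAt (fun x => A * (Real.exp (-2 * α * x) * (-2 * α)) + c)
        (A * (Real.exp (-2 * α * x) * (-2 * α) * (-2 * α))) x := by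
      have := (((hE x).mul_const (-2 * α)).const_mul A).add_const c
      convert this using 1
    exact (h1.mul (hPd x)).add ((hEg x).mul h2)
  have hderiv2 : deriv (deriv f₁) = g₂ := by
    rw [hderiv1]; exact funext fun x => (hd2 x).deriv
  have hf₀d : ∀ x : ℝ, deriv f₀ x = Real.exp (-γ * x) * (-γ) := by
    intro x
    have : f₀ = fun x => Real.exp (-γ * x) := funext hf₀
    rw [this]
    exact (hEg x).deriv
  refine ⟨fun x => (hd1 x).differentiableAt,
    fun x => by rw [hderiv1]; exact (hd2 x).differentiableAt, ?_, ?_, ?_⟩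
  · intro x
    rw [hderiv2, hf₀d, hf₁, hg₂, hP]
    have hβe : β = γ ^ 2 / 2 := by rw [hγ2]; ring
    rw [hβe]
    have key : γ * (Real.exp (-2 * α * x) - 1) / (2 * α * (γ + α))
        = A * (Real.exp (-2 * α * x) - 1) := by
      rw [hA]; ring
    rw [key]
    -- now an algebraic identity using hAe
    nlinarith [hAe, Real.exp_pos (-γ * x), Real.exp_pos (-2 * α * x),
      sq_nonneg (Real.exp (-γ * x)), mul_pos (Real.exp_pos (-γ * x)) (Real.exp_pos (-2 * α * x))]
  · rw [hf₁]; simp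
  · rw [hf₁e]
    have h1 : Tendsto (fun x : ℝ => A * Real.exp (-(γ + 2 * α) * x)) atTop (nhds 0) := by
      have h := (Real.tendsto_exp_neg_atTop_nhds_zero.comp
        (tendsto_id.const_mul_atTop (show (0:ℝ) < γ + 2 * α by linarith))).const_mul A
      rw [mul_zero] at h
      exact h.congr fun x => by
        simp only [Function.comp_apply, id_eq]
        congr 2
        ring
    have h2 : Tendsto (fun x : ℝ => A * Real.exp (-γ * x)) atTop (nhds 0) := by
      have h := (Real.tendsto_exp_neg_atTop_nhds_zero.comp
        (tendsto_id.const_mul_atTop hγpos)).const_mul A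
      rw [mul_zero] at h
      exact h.congr fun x => by
        simp only [Function.comp_apply, id_eq]
        congr 2
        ring
    have h3 : Tendsto (fun x : ℝ => c * x * Real.exp (-γ * x)) atTop (nhds 0) := by
      have h := ((Real.tendsto_pow_mul_exp_neg_atTop_nhds_zero 1).comp
        (tendsto_id.const_mul_atTop hγpos)).const_mul (c / γ)
      rw [mul_zero] at h
      exact h.congr fun x => by
        simp only [Function.comp_apply, id_eq, pow_one, neg_mul]
        field_simp
    have : Tendsto (fun x : ℝ => A * Real.exp (-(γ + 2 * α) * x) - A * Real.exp (-γ * x)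
        + c * x * Real.exp (-γ * x)) atTop (nhds 0) := by
      have := (h1.sub h2).add h3
      simpa using this
    refine this.congr fun x => ?_
    rw [hP]
    rw [show -(γ + 2 * α) * x = -2 * α * x + -γ * x by ring, Real.exp_add]
    ring
end

section
/- Let ε > 0, α > 0, c ∈ [0,1], and x > 0. With p₀(t) := (x/√(2π))t^{−3/2}e^{−x²/(2t)} and p¹(t) := (1 + ε(cx + (1 − e^{−2αx})(αt − x)/(2αx)))·p₀(t) − ε(α/4)(1 − e^{−2αx})·e^{α²t/2 + αx}·Erfc(x/√(2t) + α√(t/2)), the ratio p¹(t)/p₀(t) converges to 1 + ε(cx − (1 − e^{−2αx})/(2α)) as t → 0⁺. -/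
open MeasureTheory

/-- The complementary error function `Erfc(z) = (2/√π) ∫_z^∞ e^{−y²} dy`. -/
noncomputable def Erfc (z : ℝ) : ℝ :=
  (2 / Real.sqrt Real.pi) * ∫ y in Set.Ioi z, Real.exp (-y ^ 2)

section Aux
open Set Filter

lemma integral_mul_exp_Ioi (z : ℝ) :
    ∫ y in Set.Ioi z, y * Real.exp (-y ^ 2) = Real.exp (-z ^ 2) / 2 := by
  have hderiv : ∀ y ∈ Set.Ici z,
      HasDerivAt (fun y : ℝ => -(Real.exp (-y ^ 2)) / 2) (y * Real.exp (-y ^ 2)) y := by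
    intro y _
    have h : HasDerivAt (fun y : ℝ => -(Real.exp (-y ^ 2)) / 2) _ y :=
      (((hasDerivAt_pow 2 y).neg).exp).neg.div_const 2
    convert h using 1
    simp
    ring
  have hint : IntegrableOn (fun y : ℝ => y * Real.exp (-y ^ 2)) (Set.Ioi z) := by
    have := integrable_mul_exp_neg_mul_sq (one_pos (α := ℝ))
    simpa using this.integrableOn
  have htend : Tendsto (fun y : ℝ => -(Real.exp (-y ^ 2)) / 2) atTop (nhds 0) := by
    have h1 : Tendsto (fun y : ℝ => -y ^ 2) atTop atBot :=
      tendsto_neg_atTop_atBot.comp (tendsto_pow_atTop two_ne_zero)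
    have h2 : Tendsto (fun y : ℝ => Real.exp (-y ^ 2)) atTop (nhds 0) :=
      Real.tendsto_exp_atBot.comp h1
    simpa using (h2.neg.div_const 2)
  have := integral_Ioi_of_hasDerivAt_of_tendsto' hderiv hint htend
  rw [this]; ring

lemma integral_exp_Ioi_le (z : ℝ) (hz : 0 < z) :
    ∫ y in Set.Ioi z, Real.exp (-y ^ 2) ≤ Real.exp (-z ^ 2) / (2 * z) := by
  have hint1 : IntegrableOn (fun y : ℝ => Real.exp (-y ^ 2)) (Set.Ioi z) := by
    have := integrable_exp_neg_mul_sq (one_pos (α := ℝ))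
    simpa using this.integrableOn
  have hint2 : IntegrableOn (fun y : ℝ => (1 / z) * (y * Real.exp (-y ^ 2))) (Set.Ioi z) := by
    have := integrable_mul_exp_neg_mul_sq (one_pos (α := ℝ))
    simpa using (this.const_mul (1 / z)).integrableOn
  have hmono : ∫ y in Set.Ioi z, Real.exp (-y ^ 2)
      ≤ ∫ y in Set.Ioi z, (1 / z) * (y * Real.exp (-y ^ 2)) := by
    apply setIntegral_mono_on hint1 hint2 measurableSet_Ioi
    intro y hy
    have hy' : z ≤ y := le_of_lt hy
    have h1 : (1 : ℝ) ≤ y / z := (one_le_div hz).2 hy'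
    have := mul_le_mul_of_nonneg_right h1 (Real.exp_pos (-y ^ 2)).le
    calc Real.exp (-y ^ 2) = 1 * Real.exp (-y ^ 2) := by ring
      _ ≤ (y / z) * Real.exp (-y ^ 2) := this
      _ = (1 / z) * (y * Real.exp (-y ^ 2)) := by ring
  rw [MeasureTheory.integral_const_mul, integral_mul_exp_Ioi] at hmono
  calc ∫ y in Set.Ioi z, Real.exp (-y ^ 2) ≤ (1 / z) * (Real.exp (-z ^ 2) / 2) := hmono
    _ = Real.exp (-z ^ 2) / (2 * z) := by ring

lemma Erfc_nonneg (z : ℝ) : 0 ≤ Erfc z := by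
  apply mul_nonneg
  · positivity
  · exact setIntegral_nonneg measurableSet_Ioi fun y _ => (Real.exp_pos _).le

lemma Erfc_le (z : ℝ) (hz : 0 < z) :
    Erfc z ≤ (2 / Real.sqrt Real.pi) * (Real.exp (-z ^ 2) / (2 * z)) := by
  apply mul_le_mul_of_nonneg_left (integral_exp_Ioi_le z hz)
  positivity

end Aux

open Set Filter in
/-- Left tail asymptotic of the perturbed FPT density:
`p¹(t)/p₀(t) → 1 + ε(cx − (1 − e^{−2αx})/(2α))` as `t → 0⁺`. -/
theorem perturbed_density_left_tail
    (ε α c x : ℝ) (hε : 0 < ε) (hα : 0 < α) (hc0 : 0 ≤ c) (hc1 : c ≤ 1) (hx : 0 < x)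
    (p₀ p₁ : ℝ → ℝ)
    (hp₀ : ∀ t : ℝ, 0 < t → p₀ t =
      (x / Real.sqrt (2 * Real.pi)) * t ^ (-(3 : ℝ) / 2) * Real.exp (-x ^ 2 / (2 * t)))
    (hp₁ : ∀ t : ℝ, 0 < t → p₁ t =
      (1 + ε * (c * x + (1 - Real.exp (-2 * α * x)) * (α * t - x) / (2 * α * x))) * p₀ t -
        ε * (α / 4) * (1 - Real.exp (-2 * α * x)) *
          Real.exp (α ^ 2 * t / 2 + α * x) *
          Erfc (x / Real.sqrt (2 * t) + α * Real.sqrt (t / 2))) :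
    Filter.Tendsto (fun t => p₁ t / p₀ t) (nhdsWithin 0 (Set.Ioi 0))
      (nhds (1 + ε * (c * x - (1 - Real.exp (-2 * α * x)) / (2 * α)))) := by
  have hπ : 0 < Real.pi := Real.pi_pos
  set e₁ : ℝ := 1 - Real.exp (-2 * α * x) with he₁def
  have he₁ : 0 < e₁ := by
    have h1 : Real.exp (-2 * α * x) < 1 := by
      rw [Real.exp_lt_one_iff]; nlinarith
    simp only [he₁def]; linarith
  have hp0pos : ∀ t : ℝ, 0 < t → 0 < p₀ t := by
    intro t ht
    rw [hp₀ t ht]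
    have h1 : 0 < Real.sqrt (2 * Real.pi) := Real.sqrt_pos.2 (by positivity)
    have h2 : 0 < t ^ (-(3 : ℝ) / 2) := Real.rpow_pos_of_pos ht _
    positivity
  set A : ℝ → ℝ := fun t => 1 + ε * (c * x + e₁ * (α * t - x) / (2 * α * x)) with hAdef
  set B : ℝ → ℝ := fun t =>
      ε * (α / 4) * e₁ * Real.exp (α ^ 2 * t / 2 + α * x) *
        Erfc (x / Real.sqrt (2 * t) + α * Real.sqrt (t / 2)) / p₀ t with hBdef
  have heq : ∀ t ∈ Set.Ioi (0 : ℝ), p₁ t / p₀ t = A t - B t := by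
    intro t ht
    have ht : 0 < t := ht
    have h0 : p₀ t ≠ 0 := (hp0pos t ht).ne'
    rw [hp₁ t ht, sub_div, mul_div_cancel_right₀ _ h0]
  -- limit of A
  have hL : A 0 = 1 + ε * (c * x - e₁ / (2 * α)) := by
    simp only [hAdef]
    field_simp
    ring
  have hAcont : Continuous A := by
    simp only [hAdef]
    fun_prop
  have hAtend : Tendsto A (nhdsWithin 0 (Set.Ioi 0)) (nhds (1 + ε * (c * x - e₁ / (2 * α)))) := by
    rw [← hL]
    exact (hAcont.tendsto 0).mono_left nhdsWithin_le_nhds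
  -- bound on B
  set C : ℝ := ε * (α / 4) * e₁ * (2 / Real.sqrt Real.pi) * (Real.sqrt (2 * Real.pi) / x ^ 2) with hCdef
  have hBbound : ∀ t ∈ Set.Ioi (0 : ℝ), B t ≤ C * (Real.sqrt (t / 2) * t ^ ((3 : ℝ) / 2)) := by
    intro t ht
    have ht : 0 < t := ht
    set s : ℝ := Real.sqrt (t / 2) with hsdef
    have hs : 0 < s := Real.sqrt_pos.2 (by linarith)
    have hs2 : s ^ 2 = t / 2 := Real.sq_sqrt (by linarith)
    have hsqrt2t : Real.sqrt (2 * t) = 2 * s := by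
      rw [show (2 : ℝ) * t = 4 * (t / 2) by ring, Real.sqrt_mul (by norm_num : (0:ℝ) ≤ 4),
        show (4 : ℝ) = 2 ^ 2 by norm_num, Real.sqrt_sq (by norm_num : (0:ℝ) ≤ 2)]
    set z : ℝ := x / Real.sqrt (2 * t) + α * Real.sqrt (t / 2) with hzdef
    have hzz : z = x / (2 * s) + α * s := by rw [hzdef, hsqrt2t]
    have hzpos : 0 < z := by rw [hzz]; positivity
    have hz2 : z ^ 2 = x ^ 2 / (2 * t) + α * x + α ^ 2 * t / 2 := by
      rw [hzz]
      have ht2 : t = 2 * s ^ 2 := by rw [hs2]; ring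
      rw [ht2]
      field_simp
      ring
    -- key pointwise bound
    have hkey : Real.exp (α ^ 2 * t / 2 + α * x) * Erfc z
        ≤ (2 / Real.sqrt Real.pi) * (Real.exp (-x ^ 2 / (2 * t)) * (s / x)) := by
      have h1 : Erfc z ≤ (2 / Real.sqrt Real.pi) * (Real.exp (-z ^ 2) * (s / x)) := by
        refine (Erfc_le z hzpos).trans ?_
        apply mul_le_mul_of_nonneg_left _ (by positivity)
        rw [div_eq_mul_inv]
        apply mul_le_mul_of_nonneg_left _ (Real.exp_pos _).le
        rw [show s / x = (x / s)⁻¹ by rw [inv_div]]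
        apply inv_anti₀ (by positivity)
        rw [hzz]; rw [div_le_iff₀ hs] at *
        have : x / (2 * s) * (2 * s) = x := by field_simp
        nlinarith [mul_pos hα hs, sq_nonneg s]
      calc Real.exp (α ^ 2 * t / 2 + α * x) * Erfc z
          ≤ Real.exp (α ^ 2 * t / 2 + α * x) *
            ((2 / Real.sqrt Real.pi) * (Real.exp (-z ^ 2) * (s / x))) :=
            mul_le_mul_of_nonneg_left h1 (Real.exp_pos _).le
        _ = (2 / Real.sqrt Real.pi) *
            ((Real.exp (α ^ 2 * t / 2 + α * x) * Real.exp (-z ^ 2)) * (s / x)) := by ring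
        _ = (2 / Real.sqrt Real.pi) * (Real.exp (-x ^ 2 / (2 * t)) * (s / x)) := by
            rw [← Real.exp_add]
            congr 2
            rw [hz2]; ring
    -- now divide by p₀
    have h0 : 0 < p₀ t := hp0pos t ht
    rw [hBdef]
    rw [div_le_iff₀ h0]
    have hrw : C * (s * t ^ ((3 : ℝ) / 2)) * p₀ t
        = ε * (α / 4) * e₁ * ((2 / Real.sqrt Real.pi) *
            (Real.exp (-x ^ 2 / (2 * t)) * (s / x))) := by
      rw [hp₀ t ht]
      have hcancel : t ^ ((3 : ℝ) / 2) * t ^ (-(3 : ℝ) / 2) = 1 := by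
        rw [← Real.rpow_add ht]; norm_num
      have hsqrt2π : Real.sqrt (2 * Real.pi) ≠ 0 := ne_of_gt (Real.sqrt_pos.2 (by positivity))
      have h1 : Real.sqrt (2 * Real.pi) / x ^ 2 * (x / Real.sqrt (2 * Real.pi)) = 1 / x := by
        field_simp
      rw [hCdef]
      calc ε * (α / 4) * e₁ * (2 / Real.sqrt Real.pi) * (Real.sqrt (2 * Real.pi) / x ^ 2) *
            (s * t ^ ((3 : ℝ) / 2)) *
            (x / Real.sqrt (2 * Real.pi) * t ^ (-(3 : ℝ) / 2) * Real.exp (-x ^ 2 / (2 * t)))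
          = ε * (α / 4) * e₁ * (2 / Real.sqrt Real.pi) *
              (Real.sqrt (2 * Real.pi) / x ^ 2 * (x / Real.sqrt (2 * Real.pi))) *
              (t ^ ((3 : ℝ) / 2) * t ^ (-(3 : ℝ) / 2)) *
              (s * Real.exp (-x ^ 2 / (2 * t))) := by ring
        _ = ε * (α / 4) * e₁ * (2 / Real.sqrt Real.pi) * (1 / x) * 1 *
              (s * Real.exp (-x ^ 2 / (2 * t))) := by rw [h1, hcancel]
        _ = ε * (α / 4) * e₁ * (2 / Real.sqrt Real.pi *
              (Real.exp (-x ^ 2 / (2 * t)) * (s / x))) := by ring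
    calc ε * (α / 4) * e₁ * Real.exp (α ^ 2 * t / 2 + α * x) * Erfc z
        = ε * (α / 4) * e₁ * (Real.exp (α ^ 2 * t / 2 + α * x) * Erfc z) := by ring
      _ ≤ ε * (α / 4) * e₁ * ((2 / Real.sqrt Real.pi) *
            (Real.exp (-x ^ 2 / (2 * t)) * (s / x))) :=
          mul_le_mul_of_nonneg_left hkey (by positivity)
      _ = C * (s * t ^ ((3 : ℝ) / 2)) * p₀ t := hrw.symm
  -- B nonneg
  have hBnonneg : ∀ t ∈ Set.Ioi (0 : ℝ), 0 ≤ B t := by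
    intro t ht
    have ht : 0 < t := ht
    apply div_nonneg _ (hp0pos t ht).le
    have := Erfc_nonneg (x / Real.sqrt (2 * t) + α * Real.sqrt (t / 2))
    positivity
  -- g tends to 0
  have hgtend : Tendsto (fun t : ℝ => C * (Real.sqrt (t / 2) * t ^ ((3 : ℝ) / 2)))
      (nhdsWithin 0 (Set.Ioi 0)) (nhds 0) := by
    have h1 : Tendsto (fun t : ℝ => Real.sqrt (t / 2)) (nhds 0) (nhds 0) := by
      have hcont : Continuous fun t : ℝ => Real.sqrt (t / 2) := by fun_prop
      have h := hcont.tendsto 0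
      simp only [zero_div, Real.sqrt_zero] at h
      exact h
    have h2 : Tendsto (fun t : ℝ => t ^ ((3 : ℝ) / 2)) (nhds 0) (nhds 0) := by
      have hc : ContinuousAt (fun t : ℝ => t ^ ((3 : ℝ) / 2)) 0 :=
        Real.continuousAt_rpow_const 0 ((3 : ℝ) / 2) (Or.inr (by norm_num))
      have := hc.tendsto
      rwa [Real.zero_rpow (by norm_num : ((3 : ℝ) / 2) ≠ 0)] at this
    have := ((h1.mul h2).const_mul C).mono_left (nhdsWithin_le_nhds :
      nhdsWithin (0:ℝ) (Set.Ioi 0) ≤ nhds 0)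
    simpa using this
  have hBtend : Tendsto B (nhdsWithin 0 (Set.Ioi 0)) (nhds 0) := by
    apply squeeze_zero' (eventually_nhdsWithin_of_forall hBnonneg)
      (eventually_nhdsWithin_of_forall hBbound) hgtend
  have hfinal : Tendsto (fun t => A t - B t) (nhdsWithin 0 (Set.Ioi 0))
      (nhds (1 + ε * (c * x - e₁ / (2 * α)))) := by
    have := hAtend.sub hBtend
    simpa using this
  refine hfinal.congr' ?_
  filter_upwards [eventually_mem_nhdsWithin] with t ht
  exact (heq t ht).symm
end
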